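/- Let G(X,Y) := (4π)^{-1} e^{−(X²+Y²)/4}, and define the first-order operators D₁ := ∂_X − √3 ∂_Y and D₂ := √3 ∂_X − ∂_Y. Then for all natural numbers a, b, the function D₁^a D₂^b G is an eigenfunction of L_∞ with eigenvalue −(3a+b)/2; that is, L_∞( D₁^a D₂^b G ) = −((3a+b)/2) · D₁^a D₂^b G pointwise on ℝ². -/

import Mathlib

/-- The partial derivative `∂_X f`. -/
noncomputable def pderivX (f : ℝ × ℝ → ℝ) : ℝ × ℝ → ℝ :=
  fun p => deriv (fun x => f (x, p.2)) p.1

/-- The partial derivative `∂_Y f`. -/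
noncomputable def pderivY (f : ℝ × ℝ → ℝ) : ℝ × ℝ → ℝ :=
  fun p => deriv (fun y => f (p.1, y)) p.2

/-- The Fokker–Planck-type operator
`L_∞ f = 4 ∂_Y² f + 2 Y ∂_Y f + 2 f + (√3/2)(X ∂_Y f - Y ∂_X f)`. -/
noncomputable def Linfty (f : ℝ × ℝ → ℝ) : ℝ × ℝ → ℝ :=
  fun p =>
    4 * pderivY (pderivY f) p + 2 * p.2 * pderivY f p + 2 * f p +
      Real.sqrt 3 / 2 * (p.1 * pderivY f p - p.2 * pderivX f p)

/-- The operator `D₁ = ∂_X - √3 ∂_Y`. -/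
noncomputable def Dop₁ (f : ℝ × ℝ → ℝ) : ℝ × ℝ → ℝ :=
  fun p => pderivX f p - Real.sqrt 3 * pderivY f p

/-- The operator `D₂ = √3 ∂_X - ∂_Y`. -/
noncomputable def Dop₂ (f : ℝ × ℝ → ℝ) : ℝ × ℝ → ℝ :=
  fun p => Real.sqrt 3 * pderivX f p - pderivY f p

/-- The Gaussian `G(X,Y) = (4π)⁻¹ e^{-(X²+Y²)/4}`. -/
noncomputable def gauss2 (P : ℝ × ℝ) : ℝ :=
  (4 * Real.pi)⁻¹ * Real.exp (-(P.1 ^ 2 + P.2 ^ 2) / 4)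

namespace Stmt18Aux

open MvPolynomial

noncomputable section

abbrev MP := MvPolynomial (Fin 2) ℝ

/-- conjugated ∂_X -/
def DXp (P : MP) : MP := pderiv 0 P - C (1/2 : ℝ) * X 0 * P
/-- conjugated ∂_Y -/
def DYp (P : MP) : MP := pderiv 1 P - C (1/2 : ℝ) * X 1 * P
/-- conjugated D₁ -/
def d1f (P : MP) : MP := DXp P - C (Real.sqrt 3) * DYp P
/-- conjugated D₂ -/
def d2f (P : MP) : MP := C (Real.sqrt 3) * DXp P - DYp P
/-- conjugated L∞ -/
def LLp (P : MP) : MP :=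
  C (4:ℝ) * pderiv 1 (pderiv 1 P) - C (2:ℝ) * X 1 * pderiv 1 P +
    C (Real.sqrt 3) * C (1/2 : ℝ) * (X 0 * pderiv 1 P - X 1 * pderiv 0 P)

lemma pderiv_comm {σ : Type*} [DecidableEq σ] {R : Type*} [CommSemiring R] (i j : σ)
    (p : MvPolynomial σ R) : pderiv i (pderiv j p) = pderiv j (pderiv i p) := by
  induction p using MvPolynomial.induction_on with
  | C a => simp
  | add p q hp hq => simp [hp, hq]
  | mul_X p k hp =>
    simp only [pderiv_mul, pderiv_X, map_add, hp, Pi.single_apply]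
    split_ifs <;> simp [hp] <;> ring

lemma pd_comm01 (p : MP) : pderiv 1 (pderiv 0 p) = pderiv 0 (pderiv 1 p) :=
  pderiv_comm 1 0 p

lemma comm1 (P : MP) : LLp (d1f P) = d1f (LLp P) - C (3/2 : ℝ) * d1f P := by
  have hs : Real.sqrt 3 * Real.sqrt 3 = 3 := Real.mul_self_sqrt (by norm_num)
  apply MvPolynomial.funext
  intro x
  simp only [LLp, d1f, DXp, DYp, map_sub, map_add, pderiv_mul, pderiv_C, pderiv_X_self,
    pderiv_X_of_ne (show (0:Fin 2) ≠ 1 by decide), pderiv_X_of_ne (show (1:Fin 2) ≠ 0 by decide),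
    pd_comm01, eval_sub, eval_add, eval_mul, eval_C, eval_X, zero_mul, mul_zero, add_zero,
    zero_add, mul_one, one_mul]
  linear_combination (x 0 * eval x P / 4 - eval x (pderiv 0 P) / 2) * hs

lemma comm2 (P : MP) : LLp (d2f P) = d2f (LLp P) - C (1/2 : ℝ) * d2f P := by
  have hs : Real.sqrt 3 * Real.sqrt 3 = 3 := Real.mul_self_sqrt (by norm_num)
  apply MvPolynomial.funext
  intro x
  simp only [LLp, d2f, DXp, DYp, map_sub, map_add, pderiv_mul, pderiv_C, pderiv_X_self,
    pderiv_X_of_ne (show (0:Fin 2) ≠ 1 by decide), pderiv_X_of_ne (show (1:Fin 2) ≠ 0 by decide),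
    pd_comm01, eval_sub, eval_add, eval_mul, eval_C, eval_X, zero_mul, mul_zero, add_zero,
    zero_add, mul_one, one_mul]
  linear_combination (x 1 * eval x P / 4 - eval x (pderiv 1 P) / 2) * hs

lemma d1f_C_mul (c : ℝ) (P : MP) : d1f (C c * P) = C c * d1f P := by
  simp only [d1f, DXp, DYp, pderiv_C_mul]; ring

lemma d2f_C_mul (c : ℝ) (P : MP) : d2f (C c * P) = C c * d2f P := by
  simp only [d2f, DXp, DYp, pderiv_C_mul]; ring

lemma LLp_one : LLp 1 = 0 := by simp [LLp]

lemma eig2 (b : ℕ) : LLp (d2f^[b] 1) = C (-(b/2) : ℝ) * d2f^[b] 1 := by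
  induction b with
  | zero => simp [LLp_one]
  | succ b ih =>
    rw [Function.iterate_succ_apply', comm2, ih, d2f_C_mul, ← sub_mul, ← C_sub]
    congr 2
    push_cast; ring

lemma eig (a b : ℕ) :
    LLp (d1f^[a] (d2f^[b] 1)) = C (-((3*a+b)/2) : ℝ) * d1f^[a] (d2f^[b] 1) := by
  induction a with
  | zero =>
    simpa using eig2 b
  | succ a ih =>
    rw [Function.iterate_succ_apply', comm1, ih, d1f_C_mul, ← sub_mul, ← C_sub]
    congr 2
    push_cast; ring

/-- `P · G` -/
def FG (P : MP) : ℝ × ℝ → ℝ := fun p => eval ![p.1, p.2] P * gauss2 p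

lemma evalX_hasDerivAt (P : MP) (y x : ℝ) :
    HasDerivAt (fun t => eval ![t, y] P) (eval ![x, y] (pderiv 0 P)) x := by
  induction P using MvPolynomial.induction_on with
  | C a => simpa using hasDerivAt_const x a
  | add p q hp hq => simp only [map_add]; exact hp.add hq
  | mul_X p i hp =>
    fin_cases i
    · have h := hp.mul (hasDerivAt_id x)
      convert h using 1
      · rfl
      · rfl
      · funext t; simp
      · simp [pderiv_mul, pderiv_X_self]; ring
    · have h := hp.mul_const y
      convert h using 1
      · rfl
      · rfl
      · funext t; simp
      · simp [pderiv_mul, pderiv_X_of_ne (show (1:Fin 2) ≠ 0 by decide)]; ring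

lemma evalY_hasDerivAt (P : MP) (x y : ℝ) :
    HasDerivAt (fun t => eval ![x, t] P) (eval ![x, y] (pderiv 1 P)) y := by
  induction P using MvPolynomial.induction_on with
  | C a => simpa using hasDerivAt_const y a
  | add p q hp hq => simp only [map_add]; exact hp.add hq
  | mul_X p i hp =>
    fin_cases i
    · have h := hp.mul_const x
      convert h using 1
      · rfl
      · rfl
      · funext t; simp
      · simp [pderiv_mul, pderiv_X_of_ne (show (0:Fin 2) ≠ 1 by decide)]; ring
    · have h := hp.mul (hasDerivAt_id y)
      convert h using 1
      · rfl
      · rfl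
      · funext t; simp
      · simp [pderiv_mul, pderiv_X_self]; ring

lemma gaussX_hasDerivAt (y x : ℝ) :
    HasDerivAt (fun t => gauss2 (t, y)) (-(x/2) * gauss2 (x, y)) x := by
  have h0 : HasDerivAt (fun t : ℝ => -(t^2 + y^2)/4) (-(x/2)) x := by
    have h1 : HasDerivAt (fun t : ℝ => t^2 + y^2) (2*x) x := by
      simpa using (hasDerivAt_pow 2 x).add_const (y^2)
    have := h1.neg.div_const 4
    convert this using 1
    · rfl
    · rfl
    · rfl
    ring
  have h := (h0.exp).const_mul ((4*Real.pi)⁻¹)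
  convert h using 1
  · rfl
  · rfl
  · rfl
  simp [gauss2]; ring

lemma gaussY_hasDerivAt (x y : ℝ) :
    HasDerivAt (fun t => gauss2 (x, t)) (-(y/2) * gauss2 (x, y)) y := by
  have h0 : HasDerivAt (fun t : ℝ => -(x^2 + t^2)/4) (-(y/2)) y := by
    have h1 : HasDerivAt (fun t : ℝ => x^2 + t^2) (2*y) y := by
      simpa using (hasDerivAt_pow 2 y).const_add (x^2)
    have := h1.neg.div_const 4
    convert this using 1
    · rfl
    · rfl
    · rfl
    ring
  have h := (h0.exp).const_mul ((4*Real.pi)⁻¹)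
  convert h using 1
  · rfl
  · rfl
  · rfl
  simp [gauss2]; ring

lemma pderivX_FG (P : MP) : pderivX (FG P) = FG (DXp P) := by
  funext p
  have h := ((evalX_hasDerivAt P p.2 p.1).mul (gaussX_hasDerivAt p.2 p.1)).deriv
  show deriv (fun x => eval ![x, p.2] P * gauss2 (x, p.2)) p.1 = _
  erw [h]
  simp [FG, DXp, gauss2]; ring

lemma pderivY_FG (P : MP) : pderivY (FG P) = FG (DYp P) := by
  funext p
  have h := ((evalY_hasDerivAt P p.1 p.2).mul (gaussY_hasDerivAt p.1 p.2)).deriv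
  show deriv (fun y => eval ![p.1, y] P * gauss2 (p.1, y)) p.2 = _
  erw [h]
  simp [FG, DYp, gauss2]; ring

lemma Dop₁_FG (P : MP) : Dop₁ (FG P) = FG (d1f P) := by
  funext p
  show pderivX (FG P) p - Real.sqrt 3 * pderivY (FG P) p = _
  rw [pderivX_FG, pderivY_FG]
  simp [FG, d1f]; ring

lemma Dop₂_FG (P : MP) : Dop₂ (FG P) = FG (d2f P) := by
  funext p
  show Real.sqrt 3 * pderivX (FG P) p - pderivY (FG P) p = _
  rw [pderivX_FG, pderivY_FG]
  simp [FG, d2f]; ring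

lemma Linfty_FG (P : MP) : Linfty (FG P) = FG (LLp P) := by
  funext p
  show 4 * pderivY (pderivY (FG P)) p + 2 * p.2 * pderivY (FG P) p + 2 * FG P p +
      Real.sqrt 3 / 2 * (p.1 * pderivY (FG P) p - p.2 * pderivX (FG P) p) = _
  rw [pderivY_FG, pderivY_FG, pderivX_FG]
  simp only [FG, LLp, DXp, DYp, map_sub, map_add, pderiv_mul, pderiv_C, pderiv_X_self,
    pderiv_X_of_ne (show (0:Fin 2) ≠ 1 by decide), pderiv_X_of_ne (show (1:Fin 2) ≠ 0 by decide),
    eval_sub, eval_add, eval_mul, eval_C, eval_X, zero_mul, mul_zero, add_zero, zero_add,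
    mul_one, one_mul, Matrix.cons_val_zero, Matrix.cons_val_one, Matrix.head_cons]
  ring

lemma gauss2_eq_FG_one : gauss2 = FG 1 := by
  funext p; simp [FG]

lemma iterates_FG (a b : ℕ) :
    Dop₁^[a] (Dop₂^[b] gauss2) = FG (d1f^[a] (d2f^[b] 1)) := by
  have hb : Dop₂^[b] gauss2 = FG (d2f^[b] 1) := by
    induction b with
    | zero => simpa using gauss2_eq_FG_one
    | succ b ih =>
      rw [Function.iterate_succ_apply', Function.iterate_succ_apply', ih, Dop₂_FG]
  rw [hb]
  induction a with
  | zero => simp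
  | succ a ih =>
    rw [Function.iterate_succ_apply', Function.iterate_succ_apply', ih, Dop₁_FG]

lemma FG_C_mul (c : ℝ) (P : MP) (p : ℝ × ℝ) : FG (C c * P) p = c * FG P p := by
  simp [FG]; ring

end

end Stmt18Aux

/-- For all `a, b : ℕ`, the function `D₁^a D₂^b G` is an eigenfunction of `L_∞` with
eigenvalue `-(3a + b)/2`. -/
theorem stmt_18 (a b : ℕ) :
    ∀ p : ℝ × ℝ,
      Linfty (Dop₁^[a] (Dop₂^[b] gauss2)) p =
        -((3 * (a : ℝ) + (b : ℝ)) / 2) * Dop₁^[a] (Dop₂^[b] gauss2) p := by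
  intro p
  rw [Stmt18Aux.iterates_FG, Stmt18Aux.Linfty_FG, Stmt18Aux.eig, Stmt18Aux.FG_C_mul]
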